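/- Let G : [0,∞) → [0,∞) be strictly increasing and convex, M : (0,∞) → (0,∞), H a closed half-space with reflection x ↦ x̃, u : ℝⁿ → ℝ with polarization u_H. Then for all x, y ∈ H: G(|u_H(x̃) − u_H(ỹ)| / M(|x − y|)) + G(|u_H(x) − u_H(y)| / M(|x − y|)) ≤ G(|u(x) − u(y)| / M(|x − y|)) + G(|u(x̃) − u(ỹ)| / M(|x − y|)). -/

import Mathlib

open Real Set Classical

lemma cross_abs (a a' b b' : ℝ) (ha : a ≤ a') (hb : b' ≤ b) :
    |a - b'| + |a' - b| ≤ |a - b| + |a' - b'| := by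
  rcases abs_cases (a - b') with ⟨e1, h1⟩ | ⟨e1, h1⟩ <;>
  rcases abs_cases (a' - b) with ⟨e2, h2⟩ | ⟨e2, h2⟩ <;>
  rcases abs_cases (a - b) with ⟨e3, h3⟩ | ⟨e3, h3⟩ <;>
  rcases abs_cases (a' - b') with ⟨e4, h4⟩ | ⟨e4, h4⟩ <;>
  rw [e1, e2, e3, e4] <;> linarith

lemma key_sum (a a' b b' : ℝ) :
    |min a a' - min b b'| + |max a a' - max b b'| ≤ |a - b| + |a' - b'| := by
  rcases le_total a a' with h1 | h1 <;> rcases le_total b b' with h2 | h2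
  · rw [min_eq_left h1, min_eq_left h2, max_eq_right h1, max_eq_right h2]
  · rw [min_eq_left h1, min_eq_right h2, max_eq_right h1, max_eq_left h2]
    exact cross_abs a a' b b' h1 h2
  · rw [min_eq_right h1, min_eq_left h2, max_eq_left h1, max_eq_right h2]
    linarith [cross_abs a' a b' b h1 h2]
  · rw [min_eq_right h1, min_eq_right h2, max_eq_left h1, max_eq_left h2]
    linarith

lemma min_abs_le (a a' b b' mx : ℝ) (h1 : |a - b| ≤ mx) (h2 : |a' - b'| ≤ mx) :
    |min a a' - min b b'| ≤ mx := by
  rw [abs_le] at h1 h2 ⊢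
  rcases min_cases a a' with ⟨e, he⟩ | ⟨e, he⟩ <;> rcases min_cases b b' with ⟨f, hf⟩ | ⟨f, hf⟩ <;>
    rw [e, f] <;> constructor <;> linarith

lemma max_abs_le (a a' b b' mx : ℝ) (h1 : |a - b| ≤ mx) (h2 : |a' - b'| ≤ mx) :
    |max a a' - max b b'| ≤ mx := by
  rw [abs_le] at h1 h2 ⊢
  rcases max_cases a a' with ⟨e, he⟩ | ⟨e, he⟩ <;> rcases max_cases b b' with ⟨f, hf⟩ | ⟨f, hf⟩ <;>
    rw [e, f] <;> constructor <;> linarith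

lemma conv_pair_ord (G : ℝ → ℝ) (hm : StrictMonoOn G (Ici 0)) (hc : ConvexOn ℝ (Ici 0) G)
    (p q r s : ℝ) (hp : 0 ≤ p) (hr : 0 ≤ r) (hrs : r ≤ s)
    (hsum : p + q ≤ r + s) (hqs : q ≤ s) (hpq : p ≤ q) :
    G p + G q ≤ G r + G s := by
  have hq : 0 ≤ q := hp.trans hpq
  have hs : 0 ≤ s := hr.trans hrs
  have hmono := hm.monotoneOn
  by_cases hpr : p ≤ r
  · exact add_le_add (hmono hp hr hpr) (hmono hq hs hqs)
  · push_neg at hpr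
    have hd : 0 < s - r := by linarith
    have hdne : s - r ≠ 0 := ne_of_gt hd
    set t : ℝ := (p - r) / (s - r) with ht
    set w : ℝ := (q - r) / (s - r) with hw
    have ht0 : 0 ≤ t := div_nonneg (by linarith) hd.le
    have hw0 : 0 ≤ w := div_nonneg (by linarith) hd.le
    have ht1 : t ≤ 1 := (div_le_one hd).mpr (by linarith)
    have hw1 : w ≤ 1 := (div_le_one hd).mpr (by linarith)
    have htw : t + w ≤ 1 := by
      rw [ht, hw, ← add_div, div_le_one hd]; linarith
    have hrm : r ∈ Ici (0:ℝ) := hr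
    have hsm : s ∈ Ici (0:ℝ) := hs
    have e1 : (1 - t) * r + t * s = p := by rw [ht]; field_simp; ring
    have e2 : (1 - w) * r + w * s = q := by rw [hw]; field_simp; ring
    have c1 : G p ≤ (1 - t) * G r + t * G s := by
      have := hc.2 hrm hsm (by linarith : (0:ℝ) ≤ 1 - t) ht0 (by ring)
      rw [smul_eq_mul, smul_eq_mul, smul_eq_mul, e1] at this; exact this
    have c2 : G q ≤ (1 - w) * G r + w * G s := by
      have := hc.2 hrm hsm (by linarith : (0:ℝ) ≤ 1 - w) hw0 (by ring)
      rw [smul_eq_mul, smul_eq_mul, smul_eq_mul, e2] at this; exact this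
    have hGrs : G r ≤ G s := hmono hr hs hrs
    nlinarith [c1, c2, hGrs, htw]

lemma conv_pair (G : ℝ → ℝ) (hm : StrictMonoOn G (Ici 0)) (hc : ConvexOn ℝ (Ici 0) G)
    (p q r s : ℝ) (hp : 0 ≤ p) (hq : 0 ≤ q) (hr : 0 ≤ r) (hs : 0 ≤ s)
    (hsum : p + q ≤ r + s) (hmax : max p q ≤ max r s) :
    G p + G q ≤ G r + G s := by
  rcases le_total p q with h1 | h1 <;> rcases le_total r s with h2 | h2
  · have : q ≤ s := le_trans (le_max_right p q) (by rwa [max_eq_right h2] at hmax)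
    exact conv_pair_ord G hm hc p q r s hp hr h2 hsum this h1
  · have : q ≤ r := le_trans (le_max_right p q) (by rwa [max_eq_left h2] at hmax)
    linarith [conv_pair_ord G hm hc p q s r hp hs h2 (by linarith) this h1]
  · have : p ≤ s := le_trans (le_max_left p q) (by rwa [max_eq_right h2] at hmax)
    linarith [conv_pair_ord G hm hc q p r s hq hr h2 (by linarith) this h1]
  · have : p ≤ r := le_trans (le_max_left p q) (by rwa [max_eq_left h2] at hmax)
    linarith [conv_pair_ord G hm hc q p s r hq hs h2 (by linarith) this h1]

theorem polarization_same_side_inequality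
    (n : ℕ) (ν : EuclideanSpace ℝ (Fin n)) (c : ℝ)
    (hν : ‖ν‖ = 1)
    (H : Set (EuclideanSpace ℝ (Fin n)))
    (hH : H = {x | c ≤ inner ℝ x ν})
    (σ : EuclideanSpace ℝ (Fin n) → EuclideanSpace ℝ (Fin n))
    (hσ : ∀ x, σ x = x - (2 * ((inner ℝ x ν : ℝ) - c)) • ν)
    (G : ℝ → ℝ) (hGmono : StrictMonoOn G (Ici 0)) (hGconv : ConvexOn ℝ (Ici 0) G)
    (M : ℝ → ℝ) (hM : ∀ r > 0, 0 < M r)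
    (u uH : EuclideanSpace ℝ (Fin n) → ℝ)
    (huH : ∀ x, uH x = if x ∈ H then max (u x) (u (σ x)) else min (u x) (u (σ x))) :
    ∀ x ∈ H, ∀ y ∈ H,
      G (|uH (σ x) - uH (σ y)| / M ‖x - y‖) + G (|uH x - uH y| / M ‖x - y‖) ≤
      G (|u x - u y| / M ‖x - y‖) + G (|u (σ x) - u (σ y)| / M ‖x - y‖) := by
  have hνν : (inner ℝ ν ν : ℝ) = 1 := by
    rw [real_inner_self_eq_norm_sq, hν]; norm_num
  have hin : ∀ z, (inner ℝ (σ z) ν : ℝ) = 2 * c - inner ℝ z ν := by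
    intro z
    rw [hσ, inner_sub_left, real_inner_smul_left, hνν]; ring
  have hσσ : ∀ z, σ (σ z) = z := by
    intro z
    rw [hσ (σ z), hin z, hσ z]
    module
  have haux : ∀ z ∈ H, uH z = max (u z) (u (σ z)) ∧ uH (σ z) = min (u (σ z)) (u z) := by
    intro z hz
    have h1 : uH z = max (u z) (u (σ z)) := by rw [huH]; exact if_pos hz
    refine ⟨h1, ?_⟩
    by_cases hz' : σ z ∈ H
    · have e1 : c ≤ (inner ℝ z ν : ℝ) := by rw [hH] at hz; exact hz
      have e2 : c ≤ (inner ℝ (σ z) ν : ℝ) := by rw [hH] at hz'; exact hz'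
      rw [hin z] at e2
      have hzc : (inner ℝ z ν : ℝ) = c := by linarith
      have hσz : σ z = z := by rw [hσ, hzc]; simp
      rw [hσz, h1, hσz]
      simp [min_comm]
    · rw [huH (σ z), if_neg hz', hσσ z, min_comm]
  intro x hx y hy
  by_cases hxy : x = y
  · subst hxy; simp
  · have hm : 0 < M ‖x - y‖ := hM _ (norm_pos_iff.mpr (sub_ne_zero.mpr hxy))
    obtain ⟨ex, ex'⟩ := haux x hx
    obtain ⟨ey, ey'⟩ := haux y hy
    rw [ex, ex', ey, ey']
    set m := M ‖x - y‖ with hmm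
    set a := u x
    set a' := u (σ x)
    set b := u y
    set b' := u (σ y)
    rw [min_comm a' a, min_comm b' b]
    have hmx : max (|a - b|) (|a' - b'|) / m ≤ max (|a - b| / m) (|a' - b'| / m) := by
      rcases max_cases (|a - b|) (|a' - b'|) with ⟨e, _⟩ | ⟨e, _⟩ <;> rw [e]
      · exact le_max_left _ _
      · exact le_max_right _ _
    apply conv_pair G hGmono hGconv
    · exact div_nonneg (abs_nonneg _) hm.le
    · exact div_nonneg (abs_nonneg _) hm.le
    · exact div_nonneg (abs_nonneg _) hm.le
    · exact div_nonneg (abs_nonneg _) hm.le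
    · rw [← add_div, ← add_div]
      exact div_le_div_of_nonneg_right (key_sum a a' b b') hm.le |>.trans le_rfl
    · apply max_le
      · exact le_trans (div_le_div_of_nonneg_right
          (min_abs_le a a' b b' _ (le_max_left _ _) (le_max_right _ _)) hm.le) hmx
      · exact le_trans (div_le_div_of_nonneg_right
          (max_abs_le a a' b b' _ (le_max_left _ _) (le_max_right _ _)) hm.le) hmx
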